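/- Let M = [[a,b],[c,d]] be a 2×2 integer matrix with determinant D = ad − bc ≠ 0, and let f ∈ ℤ[x] be nonzero. If deg(μ_{M^{adj}}(f)) = deg f, where M^{adj} = [[d,−b],[−c,a]], then μ_M(μ_{M^{adj}}(f)) = D^{deg f} · f. -/

import Mathlib

set_option maxHeartbeats 1000000
set_option synthInstance.maxHeartbeats 200000

open Polynomial

/-- The Möbius transform of `f` induced by the matrix `[[a,b],[c,d]]`:
`μ_M(f) = Σ_{j≤n} f_j (ax+b)^j (cx+d)^(n-j)` where `n = deg f`. -/
noncomputable def mobius (a b c d : ℤ) (f : Polynomial ℤ) : Polynomial ℤ :=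
  ∑ j ∈ Finset.range (f.natDegree + 1),
    Polynomial.C (f.coeff j) * (Polynomial.C a * Polynomial.X + Polynomial.C b) ^ j *
      (Polynomial.C c * Polynomial.X + Polynomial.C d) ^ (f.natDegree - j)

/-- If `det M ≠ 0` and `deg(μ_{M^adj}(f)) = deg f`, where `M^adj = [[d,-b],[-c,a]]`,
then `μ_M(μ_{M^adj}(f)) = D^(deg f) · f` where `D = det M = ad - bc`. -/
theorem stmt7 (a b c d : ℤ) (hdet : a * d - b * c ≠ 0) (f : Polynomial ℤ) (hf : f ≠ 0)
    (hdeg : (mobius d (-b) (-c) a f).natDegree = f.natDegree) :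
    mobius a b c d (mobius d (-b) (-c) a f) =
      Polynomial.C ((a * d - b * c) ^ f.natDegree) * f := by
  classical
  set n := f.natDegree with hn
  set D := a * d - b * c with hD
  set g := mobius d (-b) (-c) a f with hg
  let K := FractionRing (Polynomial ℤ)
  let ι : Polynomial ℤ →+* K := algebraMap (Polynomial ℤ) K
  have hinj : Function.Injective ι := IsFractionRing.injective _ _
  let φ : ℤ →+* K := ι.comp C
  have hφ : ∀ x : ℤ, φ x = ι (C x) := fun _ => rfl
  set U : K := ι (C a * X + C b) with hU
  set V : K := ι (C c * X + C d) with hV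
  have hvne : (C c * X + C d : Polynomial ℤ) ≠ 0 := by
    intro h
    have h1 : c = 0 := by
      have h' := congrArg (fun p => Polynomial.coeff p 1) h
      simp only [Polynomial.coeff_add, Polynomial.coeff_C_mul, Polynomial.coeff_X_one,
        Polynomial.coeff_C, Polynomial.coeff_zero] at h'
      simpa using h'
    have h0 : d = 0 := by
      have h' := congrArg (fun p => Polynomial.coeff p 0) h
      simp only [Polynomial.coeff_add, Polynomial.coeff_C_mul, Polynomial.coeff_X_zero,
        Polynomial.coeff_C, Polynomial.coeff_zero] at h'
      simpa using h'
    exact hdet (by rw [hD, h1, h0]; ring)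
  have hVne : V ≠ 0 := by
    rw [hV]
    intro h
    exact hvne (hinj (by simpa using h))
  set w : K := U / V with hw
  apply hinj
  have step1 : ι (mobius a b c d g) =
      ∑ j ∈ Finset.range (n + 1), φ (g.coeff j) * U ^ j * V ^ (n - j) := by
    rw [mobius, hdeg, map_sum]
    refine Finset.sum_congr rfl fun j hj => ?_
    rw [map_mul, map_mul, map_pow, map_pow, hφ, hU, hV]
  have step2 : ∑ j ∈ Finset.range (n + 1), φ (g.coeff j) * U ^ j * V ^ (n - j)
      = V ^ n * Polynomial.eval₂ φ w g := by
    rw [Polynomial.eval₂_eq_sum_range, hdeg, Finset.mul_sum]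
    refine Finset.sum_congr rfl fun j hj => ?_
    have hj' : j ≤ n := Nat.lt_succ_iff.mp (Finset.mem_range.mp hj)
    rw [show V ^ n = V ^ j * V ^ (n - j) from by rw [← pow_add, Nat.add_sub_cancel' hj']]
    rw [hw, div_pow]
    have key : U ^ j / V ^ j * V ^ j = U ^ j := div_mul_cancel₀ _ (pow_ne_zero _ hVne)
    linear_combination (-(φ (g.coeff j)) * V ^ (n - j)) * key
  have e1 : φ d * w + φ (-b) = φ D * ι X / V := by
    have h1 : φ d * w + φ (-b) = (φ d * U + φ (-b) * V) / V := by
      rw [hw]; rw [eq_div_iff hVne, add_mul, mul_assoc, div_mul_cancel₀ _ hVne]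
    have h2 : φ d * U + φ (-b) * V = φ D * ι X := by
      have hpoly : (C d) * (C a * X + C b) + (C (-b)) * (C c * X + C d)
          = C D * X := by
        rw [hD]; simp only [map_neg, map_sub, map_mul]; ring
      rw [hφ, hφ, hU, hV, ← map_mul, ← map_mul, ← map_add, hpoly, map_mul, ← hφ]
    rw [h1, h2]
  have e2 : φ (-c) * w + φ a = φ D / V := by
    have h1 : φ (-c) * w + φ a = (φ (-c) * U + φ a * V) / V := by
      rw [hw]; rw [eq_div_iff hVne, add_mul, mul_assoc, div_mul_cancel₀ _ hVne]
    have h2 : φ (-c) * U + φ a * V = φ D := by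
      have hpoly : (C (-c)) * (C a * X + C b) + (C a) * (C c * X + C d)
          = C D := by
        rw [hD]; simp only [map_neg, map_sub, map_mul]; ring
      rw [hφ, hφ, hU, hV, ← map_mul, ← map_mul, ← map_add, hpoly, ← hφ]
    rw [h1, h2]
  have step3 : Polynomial.eval₂ φ w g =
      ∑ i ∈ Finset.range (n + 1),
        φ (f.coeff i) * (φ D * ι X / V) ^ i * (φ D / V) ^ (n - i) := by
    rw [hg, mobius, Polynomial.eval₂_finset_sum]
    refine Finset.sum_congr rfl fun i hi => ?_
    simp only [eval₂_mul, eval₂_pow, eval₂_add, eval₂_C, eval₂_X]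
    rw [e1, e2, ← hn]
  have hevalf : Polynomial.eval₂ φ (ι X) f = ι f := by
    have := Polynomial.hom_eval₂ (p := f) (f := (C : ℤ →+* Polynomial ℤ)) (g := ι) X
    rw [eval₂_C_X] at this
    exact this.symm
  have step4 : V ^ n * ∑ i ∈ Finset.range (n + 1),
        φ (f.coeff i) * (φ D * ι X / V) ^ i * (φ D / V) ^ (n - i)
      = φ (D ^ n) * ι f := by
    have term : ∀ i ∈ Finset.range (n + 1),
        V ^ n * (φ (f.coeff i) * (φ D * ι X / V) ^ i * (φ D / V) ^ (n - i))
        = φ (D ^ n) * (φ (f.coeff i) * (ι X) ^ i) := by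
      intro i hi
      have hi' : i ≤ n := Nat.lt_succ_iff.mp (Finset.mem_range.mp hi)
      rw [show V ^ n = V ^ i * V ^ (n - i) from by rw [← pow_add, Nat.add_sub_cancel' hi']]
      rw [map_pow, show (φ D : K) ^ n = (φ D) ^ i * (φ D) ^ (n - i) from by
        rw [← pow_add, Nat.add_sub_cancel' hi']]
      rw [div_pow, div_pow]
      have k1 : (φ D * ι X) ^ i / V ^ i * V ^ i = (φ D * ι X) ^ i :=
        div_mul_cancel₀ _ (pow_ne_zero _ hVne)
      have k2 : φ D ^ (n - i) / V ^ (n - i) * V ^ (n - i) = φ D ^ (n - i) :=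
        div_mul_cancel₀ _ (pow_ne_zero _ hVne)
      linear_combination (φ (f.coeff i) * (φ D ^ (n - i) / V ^ (n - i) * V ^ (n - i))) * k1 +
        (φ (f.coeff i) * (φ D * ι X) ^ i) * k2
    rw [Finset.mul_sum, Finset.sum_congr rfl term, ← Finset.mul_sum]
    congr 1
    rw [← hevalf, Polynomial.eval₂_eq_sum_range, ← hn]
  rw [step1, step2, step3, step4, map_mul, hφ]
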